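/- arXiv:1602.02543 — 4 statements merged into one kernel-verified Lean document; each statement's English description precedes it below -/
import Mathlib

section
/- For every partition Z ∈ 𝒫, the closed ball B(Z, α_Z/4) is a homogeneous ball; that is, there is a bijective isometry from B(Z, α_Z/4) ⊆ 𝒫 onto the closed ball of radius α_Z/4 in 𝒳 centered at any representative A of Z. -/
open scoped BigOperators
open MeasureTheory

noncomputable section

/-- Matrices as points of the Euclidean space `ℝ^{ℓ×m}` with the Frobenius norm. -/
abbrev Mat (l m : ℕ) := EuclideanSpace ℝ (Fin l × Fin m)

/-- `A` is a representation matrix: entries in `[0,1]` and each column sums to `1`. -/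
def IsRep {l m : ℕ} (A : Mat l m) : Prop :=
  (∀ p, 0 ≤ A p ∧ A p ≤ 1) ∧ ∀ j : Fin m, ∑ k : Fin l, A (k, j) = 1

/-- The representation space `𝒳`. -/
abbrev RepSpace (l m : ℕ) := {A : Mat l m // IsRep A}

/-- Action of a permutation on a matrix by permuting rows. -/
def permAct {l m : ℕ} (σ : Equiv.Perm (Fin l)) (A : Mat l m) : Mat l m :=
  WithLp.toLp 2 (fun p : Fin l × Fin m => A (σ⁻¹ p.1, p.2))

lemma isRep_permAct {l m : ℕ} (σ : Equiv.Perm (Fin l)) {A : Mat l m} (hA : IsRep A) :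
    IsRep (permAct σ A) := by
  refine ⟨fun p => hA.1 _, fun j => ?_⟩
  have h := Equiv.sum_comp σ⁻¹ (fun k => A (k, j))
  simpa [permAct] using h.trans (hA.2 j)

instance {l m : ℕ} : SMul (Equiv.Perm (Fin l)) (RepSpace l m) :=
  ⟨fun σ A => ⟨permAct σ A.1, isRep_permAct σ A.2⟩⟩

lemma smul_rep_def {l m : ℕ} (σ : Equiv.Perm (Fin l)) (A : RepSpace l m) :
    (σ • A).1 = permAct σ A.1 := rfl

instance {l m : ℕ} : MulAction (Equiv.Perm (Fin l)) (RepSpace l m) where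
  one_smul A := Subtype.ext rfl
  mul_smul σ τ A := Subtype.ext rfl

/-- Two representation matrices are equivalent iff they lie in the same `Π`-orbit. -/
instance pSetoid (l m : ℕ) : Setoid (RepSpace l m) :=
  MulAction.orbitRel (Equiv.Perm (Fin l)) (RepSpace l m)

/-- The partition space `𝒫 = 𝒳/Π`. -/
abbrev PSpace (l m : ℕ) := Quotient (pSetoid l m)

/-- The intrinsic metric `δ` on `𝒫`: the minimal Euclidean distance between representatives. -/
def pdist {l m : ℕ} (X Y : PSpace l m) : ℝ :=
  sInf {d | ∃ A B : RepSpace l m, ⟦A⟧ = X ∧ ⟦B⟧ = Y ∧ d = dist A B}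

/-- The degree of asymmetry `α` of the partition represented by `A`:
`min {‖A - σ·A‖ : σ ≠ id}`. -/
def alpha {l m : ℕ} (A : RepSpace l m) : ℝ :=
  sInf {d | ∃ σ : Equiv.Perm (Fin l), σ ≠ 1 ∧ d = dist A (σ • A)}

/-- The closed ball in the partition space. -/
def pBall {l m : ℕ} (Z : PSpace l m) (r : ℝ) : Set (PSpace l m) :=
  {X | pdist X Z ≤ r}

/-- The metric topology on `𝒫` generated by the open balls of `δ`. -/
instance {l m : ℕ} : TopologicalSpace (PSpace l m) :=
  TopologicalSpace.generateFrom {s | ∃ (Z : PSpace l m) (r : ℝ), s = {X | pdist X Z < r}}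

instance {l m : ℕ} : MeasurableSpace (PSpace l m) := borel _

/-- `B(Z, r)` is a homogeneous ball: there is a bijective isometry onto the closed ball of
radius `r` in `𝒳` centered at a representative of `Z`. -/
def IsHomBall {l m : ℕ} (Z : PSpace l m) (r : ℝ) : Prop :=
  ∃ A : RepSpace l m, ⟦A⟧ = Z ∧
    ∃ φ : pBall Z r → {B : RepSpace l m | dist B A ≤ r},
      Function.Bijective φ ∧
        ∀ X Y : pBall Z r,
          dist (φ X : RepSpace l m) (φ Y : RepSpace l m) =
            pdist (X : PSpace l m) (Y : PSpace l m)

/-- The `k`-th row of a representation matrix, as a point of Euclidean space `ℝ^m`. -/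
def rowOf {l m : ℕ} (A : RepSpace l m) (k : Fin l) : EuclideanSpace ℝ (Fin m) :=
  WithLp.toLp 2 (fun j => A.1 (k, j))

/-- The support of a measure: the smallest closed set of full measure. -/
def msupport {l m : ℕ} (Q : Measure (PSpace l m)) : Set (PSpace l m) :=
  ⋂₀ {S | IsClosed S ∧ Q S = 1}

/-- The Dirichlet fundamental domain centered at `A`. -/
def DirDom {l m : ℕ} (A : RepSpace l m) : Set (RepSpace l m) :=
  {B | ∀ σ : Equiv.Perm (Fin l), dist B A ≤ dist B (σ • A)}

section Stmt2Aux

variable {l m : ℕ}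

lemma dist_smul_smul (σ : Equiv.Perm (Fin l)) (B C : RepSpace l m) :
    dist (σ • B) (σ • C) = dist B C := by
  rw [Subtype.dist_eq, Subtype.dist_eq, EuclideanSpace.dist_eq, EuclideanSpace.dist_eq]
  congr 1
  have h := Equiv.sum_comp ((σ⁻¹ : Equiv.Perm (Fin l)).prodCongr (Equiv.refl (Fin m)))
    (fun q : Fin l × Fin m => dist (B.1 q) (C.1 q) ^ 2)
  simpa [smul_rep_def, permAct, Prod.map] using h

lemma smul_quot_eq (σ : Equiv.Perm (Fin l)) (B : RepSpace l m) :
    (⟦σ • B⟧ : PSpace l m) = ⟦B⟧ :=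
  Quotient.sound ⟨σ, rfl⟩

lemma pdist_eq (B C : RepSpace l m) :
    pdist (⟦B⟧ : PSpace l m) ⟦C⟧ =
      sInf (Set.range fun σ : Equiv.Perm (Fin l) => dist B (σ • C)) := by
  unfold pdist
  congr 1
  ext d
  constructor
  · rintro ⟨A', B', h1, h2, rfl⟩
    obtain ⟨τ, rfl⟩ := Quotient.eq.mp h1
    obtain ⟨ρ, rfl⟩ := Quotient.eq.mp h2
    refine ⟨τ⁻¹ * ρ, ?_⟩
    have := dist_smul_smul τ⁻¹ (τ • B) (ρ • C)
    rw [inv_smul_smul, ← mul_smul] at this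
    simpa using this
  · rintro ⟨σ, rfl⟩
    exact ⟨B, σ • C, rfl, smul_quot_eq σ C, rfl⟩

lemma pdist_le (B C : RepSpace l m) (σ : Equiv.Perm (Fin l)) :
    pdist (⟦B⟧ : PSpace l m) ⟦C⟧ ≤ dist B (σ • C) := by
  rw [pdist_eq]
  exact csInf_le (Set.finite_range _).bddBelow ⟨σ, rfl⟩

lemma pdist_exists (B C : RepSpace l m) :
    ∃ σ : Equiv.Perm (Fin l), pdist (⟦B⟧ : PSpace l m) ⟦C⟧ = dist B (σ • C) := by
  rw [pdist_eq]
  obtain ⟨σ, hσ⟩ := (Set.range_nonempty _).csInf_mem (Set.finite_range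
    (fun σ : Equiv.Perm (Fin l) => dist B (σ • C)))
  exact ⟨σ, hσ.symm⟩

lemma alpha_nonneg (A : RepSpace l m) : 0 ≤ alpha A := by
  apply Real.sInf_nonneg
  rintro x ⟨σ, -, rfl⟩
  exact dist_nonneg

lemma alpha_le (A : RepSpace l m) {σ : Equiv.Perm (Fin l)} (hσ : σ ≠ 1) :
    alpha A ≤ dist A (σ • A) := by
  apply csInf_le
  · exact ⟨0, by rintro x ⟨τ, -, rfl⟩; exact dist_nonneg⟩
  · exact ⟨σ, hσ, rfl⟩

lemma rep_min (X : PSpace l m) (C : RepSpace l m) :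
    ∃ B : RepSpace l m, ⟦B⟧ = X ∧ dist B C = pdist X ⟦C⟧ := by
  obtain ⟨B, rfl⟩ := Quotient.exists_rep X
  obtain ⟨σ, hσ⟩ := pdist_exists B C
  refine ⟨σ⁻¹ • B, smul_quot_eq σ⁻¹ B, ?_⟩
  have h := dist_smul_smul σ (σ⁻¹ • B) C
  rw [smul_inv_smul] at h
  rw [hσ, ← h]

end Stmt2Aux

theorem stmt2 {l m : ℕ} (hl : 1 ≤ l) (hm : 1 ≤ m) (A : RepSpace l m) :
    ∃ φ : pBall (⟦A⟧ : PSpace l m) (alpha A / 4) → {B : RepSpace l m | dist B A ≤ alpha A / 4},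
      Function.Bijective φ ∧
        ∀ X Y : pBall (⟦A⟧ : PSpace l m) (alpha A / 4),
          dist (φ X : RepSpace l m) (φ Y : RepSpace l m) =
            pdist (X : PSpace l m) (Y : PSpace l m) := by
  classical
  set r := alpha A / 4 with hr
  have halpha : 0 ≤ alpha A := alpha_nonneg A
  -- uniqueness of the representative within radius r of A
  have uniq : ∀ B C : RepSpace l m, (⟦B⟧ : PSpace l m) = ⟦C⟧ →
      dist B A ≤ r → dist C A ≤ r → B = C := by
    intro B C hBC hB hC
    obtain ⟨σ, hσ'⟩ := Quotient.eq.mp hBC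
    have hσ : σ • C = B := hσ'
    by_cases h1 : σ = 1
    · rw [h1, one_smul] at hσ; exact hσ.symm
    · have hle : alpha A ≤ dist A (σ • A) := alpha_le A h1
      have h2 : dist B (σ • A) = dist C A := by
        rw [← hσ, dist_smul_smul]
      have h3 : dist A (σ • A) ≤ dist A B + dist B (σ • A) := dist_triangle _ _ _
      rw [h2, dist_comm A B] at h3
      have h4 : alpha A ≤ 0 := by
        have := hle.trans h3
        rw [hr] at hB hC
        linarith
      have hr0 : r = 0 := by rw [hr]; linarith
      have hB0 : B = A := by
        have : dist B A = 0 := le_antisymm (hr0 ▸ hB) dist_nonneg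
        exact dist_eq_zero.mp this
      have hC0 : C = A := by
        have : dist C A = 0 := le_antisymm (hr0 ▸ hC) dist_nonneg
        exact dist_eq_zero.mp this
      rw [hB0, hC0]
  -- choose for each point of the ball its canonical representative
  have hrep : ∀ X : pBall (⟦A⟧ : PSpace l m) r, ∃ B : RepSpace l m,
      ⟦B⟧ = (X : PSpace l m) ∧ dist B A ≤ r := by
    intro X
    obtain ⟨B, hB1, hB2⟩ := rep_min (X : PSpace l m) A
    exact ⟨B, hB1, hB2.le.trans X.2⟩
  choose f hf1 hf2 using hrep
  refine ⟨fun X => ⟨f X, hf2 X⟩, ⟨?_, ?_⟩, ?_⟩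
  · -- injective
    intro X Y h
    have hf : f X = f Y := congrArg Subtype.val h
    apply Subtype.ext
    rw [← hf1 X, ← hf1 Y, hf]
  · -- surjective
    rintro ⟨B, hB⟩
    have hBmem : pdist (⟦B⟧ : PSpace l m) ⟦A⟧ ≤ r := by
      have := pdist_le B A 1
      rw [one_smul] at this
      exact this.trans hB
    refine ⟨⟨⟦B⟧, hBmem⟩, ?_⟩
    apply Subtype.ext
    exact uniq _ _ (hf1 _) (hf2 _) hB
  · -- isometry
    intro X Y
    have hX : (⟦f X⟧ : PSpace l m) = X := hf1 X
    have hY : (⟦f Y⟧ : PSpace l m) = Y := hf1 Y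
    rw [← hX, ← hY]
    have hle : pdist (⟦f X⟧ : PSpace l m) ⟦f Y⟧ ≤ dist (f X) (f Y) := by
      have := pdist_le (f X) (f Y) 1
      rwa [one_smul] at this
    refine le_antisymm ?_ hle
    obtain ⟨σ, hσ⟩ := pdist_exists (f X) (f Y)
    by_cases h1 : σ = 1
    · rw [h1, one_smul] at hσ; rw [hσ]
    · have ha : alpha A ≤ dist A (σ • A) := alpha_le A h1
      have t1 : dist A (σ • A) ≤ dist A (f X) + dist (f X) (σ • f Y) + dist (σ • f Y) (σ • A) :=
        dist_triangle4 _ _ _ _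
      rw [dist_smul_smul, dist_comm A (f X)] at t1
      have hfX : dist (f X) A ≤ r := hf2 X
      have hfY : dist (f Y) A ≤ r := hf2 Y
      have t2 : dist (f X) (f Y) ≤ dist (f X) A + dist A (f Y) := dist_triangle _ _ _
      rw [dist_comm A (f Y)] at t2
      rw [hσ]
      rw [hr] at hfX hfY
      linarith [ha.trans t1]

end
end

section
/- Suppose ℓ ≥ 2. For any partition Z = [A] with rows a_1,…,a_ℓ of A, the degree of asymmetry satisfies α_Z = min{ √2 · ‖a_p − a_q‖ : 1 ≤ p < q ≤ ℓ }, where ‖·‖ is the Euclidean norm on ℝ^m. -/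
open scoped BigOperators
open MeasureTheory

noncomputable section

lemma row_dist_sq {l m : ℕ} (A : RepSpace l m) (p q : Fin l) :
    dist (rowOf A p) (rowOf A q) ^ 2 = ∑ j : Fin m, (A.1 (p, j) - A.1 (q, j)) ^ 2 := by
  rw [EuclideanSpace.dist_eq, Real.sq_sqrt (by positivity)]
  simp [rowOf, Real.dist_eq, sq_abs]

lemma perm_dist_sq {l m : ℕ} (A : RepSpace l m) (σ : Equiv.Perm (Fin l)) :
    dist A (σ • A) ^ 2 = ∑ k : Fin l, dist (rowOf A k) (rowOf A (σ⁻¹ k)) ^ 2 := by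
  have h1 : dist A (σ • A) ^ 2 = ∑ p : Fin l × Fin m, (A.1 p - A.1 (σ⁻¹ p.1, p.2)) ^ 2 := by
    rw [Subtype.dist_eq, smul_rep_def, EuclideanSpace.dist_eq,
      Real.sq_sqrt (by positivity)]
    simp [permAct, Real.dist_eq, sq_abs]
  rw [h1, Fintype.sum_prod_type]
  refine Finset.sum_congr rfl fun k _ => ?_
  rw [row_dist_sq]

lemma dist_swap {l m : ℕ} (A : RepSpace l m) {p q : Fin l} (hpq : p ≠ q) :
    dist A (Equiv.swap p q • A) = Real.sqrt 2 * dist (rowOf A p) (rowOf A q) := by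
  have hsq : dist A (Equiv.swap p q • A) ^ 2
      = 2 * dist (rowOf A p) (rowOf A q) ^ 2 := by
    rw [perm_dist_sq]
    have : ∀ k : Fin l, dist (rowOf A k) (rowOf A ((Equiv.swap p q)⁻¹ k)) ^ 2
        = if k = p then dist (rowOf A p) (rowOf A q) ^ 2
          else if k = q then dist (rowOf A p) (rowOf A q) ^ 2 else 0 := by
      intro k
      rcases eq_or_ne k p with rfl | hkp
      · simp [Equiv.swap_apply_left, hpq]
      · rcases eq_or_ne k q with rfl | hkq
        · simp [Equiv.swap_apply_right, hkp, dist_comm]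
        · simp [Equiv.swap_apply_of_ne_of_ne hkp hkq, hkp, hkq]
    rw [Finset.sum_congr rfl fun k _ => this k]
    set D := dist (rowOf A p) (rowOf A q) ^ 2 with hD
    have hsplit : ∀ k : Fin l,
        (if k = p then D else if k = q then D else 0)
          = (if k = p then D else 0) + (if k = q then D else 0) := by
      intro k
      rcases eq_or_ne k p with rfl | hkp
      · simp [hpq]
      · simp [hkp]
    rw [Finset.sum_congr rfl fun k _ => hsplit k, Finset.sum_add_distrib]
    simp [Finset.sum_ite_eq']
    ring
  have h2 : (0:ℝ) ≤ dist A (Equiv.swap p q • A) := dist_nonneg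
  have h3 : (0:ℝ) ≤ Real.sqrt 2 * dist (rowOf A p) (rowOf A q) := by positivity
  nlinarith [Real.sq_sqrt (by norm_num : (0:ℝ) ≤ 2), Real.sqrt_nonneg 2,
    dist_nonneg (x := rowOf A p) (y := rowOf A q)]

theorem stmt9 {l m : ℕ} (hl : 2 ≤ l) (hm : 1 ≤ m) (A : RepSpace l m) :
    alpha A =
      sInf {d | ∃ p q : Fin l, p < q ∧ d = Real.sqrt 2 * dist (rowOf A p) (rowOf A q)} := by
  set S1 : Set ℝ := {d | ∃ σ : Equiv.Perm (Fin l), σ ≠ 1 ∧ d = dist A (σ • A)} with hS1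
  set S2 : Set ℝ := {d | ∃ p q : Fin l, p < q ∧ d = Real.sqrt 2 * dist (rowOf A p) (rowOf A q)}
    with hS2
  have hp0 : (⟨0, by omega⟩ : Fin l) ≠ ⟨1, by omega⟩ := by
    simp [Fin.ext_iff]
  have hS2ne : S2.Nonempty :=
    ⟨_, ⟨0, by omega⟩, ⟨1, by omega⟩, by simp [Fin.lt_def], rfl⟩
  have hS1bdd : BddBelow S1 := ⟨0, fun d ⟨σ, _, hd⟩ => hd ▸ dist_nonneg⟩
  have hS2bdd : BddBelow S2 := ⟨0, fun d ⟨p, q, _, hd⟩ => hd ▸ by positivity⟩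
  have hS1ne : S1.Nonempty := by
    exact ⟨_, Equiv.swap ⟨0, by omega⟩ ⟨1, by omega⟩,
      fun h => hp0 (Equiv.swap_eq_one_iff.mp h), rfl⟩
  -- membership of pair distances in S2
  have hmem2 : ∀ p q : Fin l, p ≠ q →
      Real.sqrt 2 * dist (rowOf A p) (rowOf A q) ∈ S2 := by
    intro p q hpq
    rcases lt_or_gt_of_ne hpq with h | h
    · exact ⟨p, q, h, rfl⟩
    · exact ⟨q, p, h, by rw [dist_comm]⟩
  have hS2sub : S2 ⊆ S1 := by
    rintro d ⟨p, q, hpq, rfl⟩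
    exact ⟨Equiv.swap p q, fun h => hpq.ne (Equiv.swap_eq_one_iff.mp h),
      (dist_swap A hpq.ne).symm⟩
  refine le_antisymm (csInf_le_csInf hS1bdd hS2ne hS2sub) ?_
  refine le_csInf hS1ne ?_
  rintro d ⟨σ, hσ, rfl⟩
  set c := sInf S2 with hc
  have hc0 : 0 ≤ c := le_csInf hS2ne fun d ⟨p, q, _, hd⟩ => hd ▸ by positivity
  -- choose p with σ⁻¹ p ≠ p
  have hσ' : σ⁻¹ ≠ 1 := by simpa using inv_ne_one.mpr hσ
  obtain ⟨p, hp⟩ : ∃ p, σ⁻¹ p ≠ p := by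
    by_contra h
    push_neg at h
    exact hσ' (Equiv.ext h)
  set q := σ⁻¹ p with hq
  have hq' : σ⁻¹ q ≠ q := by
    intro h
    exact hp (σ⁻¹.injective (by rw [h]))
  -- each relevant row distance is at least c / √2, i.e. c ≤ √2 * rowdist
  have key : ∀ k : Fin l, σ⁻¹ k ≠ k →
      c ^ 2 / 2 ≤ dist (rowOf A k) (rowOf A (σ⁻¹ k)) ^ 2 := by
    intro k hk
    have h1 : c ≤ Real.sqrt 2 * dist (rowOf A k) (rowOf A (σ⁻¹ k)) :=
      csInf_le hS2bdd (hmem2 k (σ⁻¹ k) (Ne.symm hk))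
    have h2 : (0:ℝ) ≤ dist (rowOf A k) (rowOf A (σ⁻¹ k)) := dist_nonneg
    nlinarith [Real.sq_sqrt (by norm_num : (0:ℝ) ≤ 2), Real.sqrt_nonneg 2]
  have hsum : c ^ 2 ≤ dist A (σ • A) ^ 2 := by
    rw [perm_dist_sq]
    have hsub : ({p, q} : Finset (Fin l)) ⊆ Finset.univ := Finset.subset_univ _
    have hterm : ∑ k ∈ ({p, q} : Finset (Fin l)),
        dist (rowOf A k) (rowOf A (σ⁻¹ k)) ^ 2
        ≤ ∑ k : Fin l, dist (rowOf A k) (rowOf A (σ⁻¹ k)) ^ 2 :=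
      Finset.sum_le_sum_of_subset_of_nonneg hsub fun k _ _ => by positivity
    have hpair : Finset.sum ({p, q} : Finset (Fin l))
        (fun k => dist (rowOf A k) (rowOf A (σ⁻¹ k)) ^ 2)
        = dist (rowOf A p) (rowOf A (σ⁻¹ p)) ^ 2
          + dist (rowOf A q) (rowOf A (σ⁻¹ q)) ^ 2 :=
      Finset.sum_pair (Ne.symm hp)
    have h1 := key p hp
    have h2 := key q hq'
    rw [hpair] at hterm
    linarith
  have hd0 : (0:ℝ) ≤ dist A (σ • A) := dist_nonneg
  nlinarith

end
end

section
/- Suppose ℓ ≥ 2 and let Z = [A] be a hard partition with cluster sizes n_k = |{j : A_{kj} = 1}| for k = 1,…,ℓ. Then α_Z = min{ √(2(n_p + n_q)) : 1 ≤ p < q ≤ ℓ }; equivalently, α_Z = √(2(m_1 + m_2)), where m_1 ≤ m_2 are the sizes of the two smallest clusters of Z. -/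
open scoped BigOperators
open MeasureTheory

noncomputable section

-- AUX

lemma sum_sq_ind {l : ℕ} (a b : Fin l) :
    ∑ k : Fin l, ((if k = a then (1:ℝ) else 0) - (if k = b then 1 else 0))^2
      = if a = b then 0 else 2 := by
  rcases eq_or_ne a b with h | h
  · subst h; simp
  · have h1 : ∀ k : Fin l, ((if k = a then (1:ℝ) else 0) - (if k = b then 1 else 0))^2
        = (if k = a then (1:ℝ) else 0) + (if k = b then 1 else 0) := by
      intro k
      by_cases h1 : k = a <;> by_cases h2 : k = b
      · exact absurd (h1 ▸ h2) h
      all_goals simp [h1, h2, h, h.symm]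
    simp [h1, Finset.sum_add_distrib, h]
    norm_num

lemma dist_formula {l m : ℕ} (A : RepSpace l m) (r : Fin m → Fin l)
    (hA : ∀ k j, A.1 (k, j) = if k = r j then 1 else 0)
    (σ : Equiv.Perm (Fin l)) :
    dist A (σ • A) =
      Real.sqrt (2 * ((Finset.univ.filter fun j : Fin m => σ (r j) ≠ r j).card : ℝ)) := by
  rw [Subtype.dist_eq, smul_rep_def, EuclideanSpace.dist_eq]
  congr 1
  have key : ∀ p : Fin l × Fin m,
      dist (A.1 p) (permAct σ A.1 p) ^ 2
        = ((if p.1 = r p.2 then (1:ℝ) else 0) - (if p.1 = σ (r p.2) then 1 else 0))^2 := by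
    rintro ⟨k, j⟩
    rw [Real.dist_eq, sq_abs, permAct, hA, hA]
    have : (σ⁻¹ k = r j) = (k = σ (r j)) := by
      simp [Equiv.eq_symm_apply, eq_comm, Equiv.Perm.inv_def]
    simp only [this]
  calc ∑ p : Fin l × Fin m, dist (A.1 p) (permAct σ A.1 p) ^ 2
      = ∑ j : Fin m, ∑ k : Fin l,
          ((if k = r j then (1:ℝ) else 0) - (if k = σ (r j) then 1 else 0))^2 := by
        rw [Fintype.sum_prod_type, Finset.sum_comm]
        simp only [key]
    _ = ∑ j : Fin m, (if r j = σ (r j) then (0:ℝ) else 2) := by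
        simp only [sum_sq_ind]
    _ = 2 * ((Finset.univ.filter fun j : Fin m => σ (r j) ≠ r j).card : ℝ) := by
        rw [Finset.sum_ite, Finset.sum_const, Finset.sum_const]
        have : (Finset.univ.filter fun j : Fin m => ¬ (r j = σ (r j)))
            = (Finset.univ.filter fun j : Fin m => σ (r j) ≠ r j) := by
          apply Finset.filter_congr; intro j _; simp [eq_comm, Ne]
        rw [this]
        simp [mul_comm]

theorem stmt10 {l m : ℕ} (hl : 2 ≤ l) (hm : 1 ≤ m) (A : RepSpace l m)
    (hhard : ∀ p, A.1 p = 0 ∨ A.1 p = 1) :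
    alpha A =
      sInf {d | ∃ p q : Fin l, p < q ∧
        d = Real.sqrt (2 * (((Finset.univ.filter fun j : Fin m => A.1 (p, j) = 1).card +
              (Finset.univ.filter fun j : Fin m => A.1 (q, j) = 1).card : ℕ) : ℝ))} := by
  -- the unique 1-entry in each column
  have hex : ∀ j : Fin m, ∃ k : Fin l, A.1 (k, j) = 1 := by
    intro j
    by_contra h
    push_neg at h
    have h0 : ∀ k : Fin l, A.1 (k, j) = 0 := fun k => (hhard (k, j)).resolve_right (h k)
    have := A.2.2 j
    simp [h0] at this
  set r : Fin m → Fin l := fun j => (hex j).choose with hr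
  have hr1 : ∀ j, A.1 (r j, j) = 1 := fun j => (hex j).choose_spec
  have hAkey : ∀ k j, A.1 (k, j) = if k = r j then 1 else 0 := by
    intro k j
    rcases eq_or_ne k (r j) with h | h
    · subst h; simp [hr1 j]
    · simp only [h, if_false]
      rcases hhard (k, j) with h0 | h1
      · exact h0
      · exfalso
        have hsum := A.2.2 j
        have hsub : ({k, r j} : Finset (Fin l)) ⊆ Finset.univ := Finset.subset_univ _
        have h2 : (2:ℝ) ≤ ∑ i : Fin l, A.1 (i, j) := by
          have := Finset.sum_le_sum_of_subset_of_nonneg hsub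
            (fun i _ _ => (A.2.1 (i, j)).1)
          rw [Finset.sum_pair h, h1, hr1 j] at this
          linarith
        rw [hsum] at h2; linarith
  -- cluster sizes
  set n : Fin l → ℕ := fun k => (Finset.univ.filter fun j : Fin m => A.1 (k, j) = 1).card
    with hn
  have hfilter : ∀ k : Fin l, (Finset.univ.filter fun j : Fin m => A.1 (k, j) = 1)
      = Finset.univ.filter fun j : Fin m => r j = k := by
    intro k
    apply Finset.filter_congr
    intro j _
    rw [hAkey k j]
    rcases eq_or_ne k (r j) with h | h <;> simp [h, eq_comm]
  -- the two index points
  have h0l : (0 : ℕ) < l := by omega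
  have h1l : (1 : ℕ) < l := by omega
  set p0 : Fin l := ⟨0, h0l⟩
  set q0 : Fin l := ⟨1, h1l⟩
  have hpq0 : p0 < q0 := by simp [p0, q0, Fin.lt_def]
  have hpq0' : p0 ≠ q0 := ne_of_lt hpq0
  -- cardinality for swaps
  have hswap : ∀ p q : Fin l, p ≠ q →
      ((Finset.univ.filter fun j : Fin m => (Equiv.swap p q) (r j) ≠ r j).card : ℕ)
        = n p + n q := by
    intro p q hne
    have : (Finset.univ.filter fun j : Fin m => (Equiv.swap p q) (r j) ≠ r j)
        = (Finset.univ.filter fun j : Fin m => r j = p)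
          ∪ (Finset.univ.filter fun j : Fin m => r j = q) := by
      ext j
      simp only [Finset.mem_filter, Finset.mem_union, Finset.mem_univ, true_and]
      rw [Equiv.swap_apply_ne_self_iff]
      tauto
    rw [this, Finset.card_union_of_disjoint, hn]
    · simp [hfilter]
    · rw [Finset.disjoint_filter]
      intro j _ hj
      simp [hj, hne]
  -- general lower bound
  have hbound : ∀ (σ : Equiv.Perm (Fin l)) (p q : Fin l), p ≠ q → σ p ≠ p → σ q ≠ q →
      (n p + n q : ℝ) ≤ ((Finset.univ.filter fun j : Fin m => σ (r j) ≠ r j).card : ℕ) := by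
    intro σ p q hne hp hq
    have hsub : (Finset.univ.filter fun j : Fin m => r j = p)
          ∪ (Finset.univ.filter fun j : Fin m => r j = q)
        ⊆ (Finset.univ.filter fun j : Fin m => σ (r j) ≠ r j) := by
      intro j hj
      simp only [Finset.mem_filter, Finset.mem_union, Finset.mem_univ, true_and] at hj ⊢
      rcases hj with h | h <;> rw [h] <;> assumption
    have hcard := Finset.card_le_card hsub
    rw [Finset.card_union_of_disjoint] at hcard
    · have : n p + n q ≤ (Finset.univ.filter fun j : Fin m => σ (r j) ≠ r j).card := by
        simpa [hn, hfilter] using hcard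
      exact_mod_cast this
    · rw [Finset.disjoint_filter]
      intro j _ hj
      simp [hj, hne]
  -- the two sets
  set S1 : Set ℝ := {d | ∃ σ : Equiv.Perm (Fin l), σ ≠ 1 ∧ d = dist A (σ • A)} with hS1
  set S2 : Set ℝ := {d | ∃ p q : Fin l, p < q ∧
      d = Real.sqrt (2 * (((Finset.univ.filter fun j : Fin m => A.1 (p, j) = 1).card +
            (Finset.univ.filter fun j : Fin m => A.1 (q, j) = 1).card : ℕ) : ℝ))} with hS2
  have hS2eq : ∀ d ∈ S2, ∃ p q : Fin l, p < q ∧ d = Real.sqrt (2 * ((n p + n q : ℕ) : ℝ)) := by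
    intro d hd
    obtain ⟨p, q, hpq, hd⟩ := hd
    exact ⟨p, q, hpq, hd⟩
  -- S2 ⊆ S1
  have hsub21 : S2 ⊆ S1 := by
    intro d hd
    obtain ⟨p, q, hpq, hd⟩ := hS2eq d hd
    refine ⟨Equiv.swap p q, ?_, ?_⟩
    · intro h
      have := Equiv.swap_apply_left p q
      rw [h] at this
      simp at this
      exact (ne_of_lt hpq) this
    · rw [dist_formula A r hAkey, hswap p q (ne_of_lt hpq), hd]
  -- lower bounds (BddBelow)
  have hb1 : BddBelow S1 := ⟨0, fun d hd => by obtain ⟨σ, _, hd⟩ := hd; rw [hd]; exact dist_nonneg⟩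
  have hb2 : BddBelow S2 := ⟨0, fun d hd => by
    obtain ⟨p, q, _, hd⟩ := hd; rw [hd]; exact Real.sqrt_nonneg _⟩
  -- nonempty
  have hne2 : S2.Nonempty := ⟨_, p0, q0, hpq0, rfl⟩
  have hne1 : S1.Nonempty := ⟨_, hsub21 hne2.choose_spec⟩
  rw [alpha]
  apply le_antisymm
  · exact csInf_le_csInf hb1 hne2 hsub21
  · apply le_csInf hne1
    intro d hd
    obtain ⟨σ, hσ, hd⟩ := hd
    rw [hd, dist_formula A r hAkey]
    -- find two moved points
    obtain ⟨p, hp⟩ : ∃ p : Fin l, σ p ≠ p := by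
      by_contra h
      push_neg at h
      exact hσ (Equiv.ext fun x => by simp [h x])
    have hpq : p ≠ σ p := fun h => hp h.symm
    have hqmoved : σ (σ p) ≠ σ p := fun h => hp (σ.injective h)
    have hkey : (n p + n (σ p) : ℝ)
        ≤ ((Finset.univ.filter fun j : Fin m => σ (r j) ≠ r j).card : ℕ) :=
      hbound σ p (σ p) hpq hp hqmoved
    have hmono : Real.sqrt (2 * ((n p + n (σ p) : ℕ) : ℝ))
        ≤ Real.sqrt (2 * ((Finset.univ.filter fun j : Fin m => σ (r j) ≠ r j).card : ℕ)) := by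
      apply Real.sqrt_le_sqrt
      push_cast at hkey ⊢
      linarith
    refine le_trans (csInf_le hb2 ?_) hmono
    rcases lt_or_gt_of_ne hpq with h | h
    · exact ⟨p, σ p, h, by simp [hn]⟩
    · exact ⟨σ p, p, h, by simp [hn, Nat.add_comm]⟩


end
end

section
/- Let M and M' be two mean partitions of the sample (X_1,…,X_n) of partitions. Then there exist representatives A_i and A_i' of X_i for each i such that δ(M, M') ≤ (1/n)·Σ_{j ∈ J} ‖A_j − A_j'‖, where J = { j ∈ {1,…,n} : A_j ≠ A_j' }. -/
open scoped BigOperators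
open MeasureTheory

noncomputable section

section Aux

variable {l m : ℕ}

lemma dist_smul_perm (σ : Equiv.Perm (Fin l)) (A B : RepSpace l m) :
    dist (σ • A) (σ • B) = dist A B := by
  rw [Subtype.dist_eq, Subtype.dist_eq, smul_rep_def, smul_rep_def,
    EuclideanSpace.dist_eq, EuclideanSpace.dist_eq]
  congr 1
  exact Fintype.sum_equiv (Equiv.prodCongr σ⁻¹ (Equiv.refl (Fin m))) _ _ (fun p => rfl)

lemma quot_eq_iff (A B : RepSpace l m) :
    (⟦A⟧ : PSpace l m) = ⟦B⟧ ↔ ∃ σ : Equiv.Perm (Fin l), σ • B = A := by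
  rw [Quotient.eq]
  exact MulAction.orbitRel_apply.trans MulAction.mem_orbit_iff

lemma pdistSet_nonempty (X Y : PSpace l m) :
    {d | ∃ A B : RepSpace l m, ⟦A⟧ = X ∧ ⟦B⟧ = Y ∧ d = dist A B}.Nonempty := by
  obtain ⟨A, hA⟩ := Quotient.exists_rep X
  obtain ⟨B, hB⟩ := Quotient.exists_rep Y
  exact ⟨dist A B, A, B, hA, hB, rfl⟩

lemma pdistSet_bddBelow (X Y : PSpace l m) :
    BddBelow {d | ∃ A B : RepSpace l m, ⟦A⟧ = X ∧ ⟦B⟧ = Y ∧ d = dist A B} := by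
  refine ⟨0, fun d hd => ?_⟩
  obtain ⟨A, B, _, _, rfl⟩ := hd
  exact dist_nonneg

lemma pdist_le_s14 {X Y : PSpace l m} {A B : RepSpace l m} (hA : (⟦A⟧ : PSpace l m) = X)
    (hB : (⟦B⟧ : PSpace l m) = Y) : pdist X Y ≤ dist A B :=
  csInf_le (pdistSet_bddBelow X Y) ⟨A, B, hA, hB, rfl⟩

lemma pdist_nonneg (X Y : PSpace l m) : 0 ≤ pdist X Y := by
  refine le_csInf (pdistSet_nonempty X Y) ?_
  rintro d ⟨A, B, _, _, rfl⟩
  exact dist_nonneg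

/-- Since the group is finite, an optimal representative exists. -/
lemma exists_opt (X : PSpace l m) (B : RepSpace l m) :
    ∃ A : RepSpace l m, (⟦A⟧ : PSpace l m) = X ∧ dist A B = pdist X ⟦B⟧ := by
  classical
  obtain ⟨A₀, hA₀⟩ := Quotient.exists_rep X
  set S := {d | ∃ A B' : RepSpace l m, (⟦A⟧ : PSpace l m) = X ∧ (⟦B'⟧ : PSpace l m) = ⟦B⟧ ∧
    d = dist A B'} with hS
  have hfin : S.Finite := by
    have hsub : S ⊆ (fun σ : Equiv.Perm (Fin l) => dist (σ • A₀) B) '' Set.univ := by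
      rintro d ⟨A, B', hA, hB', rfl⟩
      obtain ⟨τ, hτ⟩ := (quot_eq_iff B' B).1 hB'
      obtain ⟨ρ, hρ⟩ := (quot_eq_iff A A₀).1 (hA.trans hA₀.symm)
      refine ⟨τ⁻¹ * ρ, Set.mem_univ _, ?_⟩
      have : dist A B' = dist (τ⁻¹ • A) (τ⁻¹ • B') := (dist_smul_perm τ⁻¹ A B').symm
      rw [this, ← hτ, ← hρ, inv_smul_smul, smul_smul]
    exact Set.Finite.subset (Set.Finite.image _ Set.finite_univ) hsub
  have hmem : sInf S ∈ S := (pdistSet_nonempty X ⟦B⟧).csInf_mem hfin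
  obtain ⟨A, B', hA, hB', hd⟩ := hmem
  obtain ⟨τ, hτ⟩ := (quot_eq_iff B' B).1 hB'
  refine ⟨τ⁻¹ • A, ?_, ?_⟩
  · rw [← hA]
    exact Quotient.sound ⟨τ⁻¹, rfl⟩
  · have h1 : dist (τ⁻¹ • A) B = dist A B' := by
      rw [← hτ, ← dist_smul_perm τ (τ⁻¹ • A) B, smul_inv_smul]
    rw [h1, ← hd]
    rfl

/-- The barycenter of representation matrices is a representation matrix. -/
lemma isRep_bary {n : ℕ} (hn : 1 ≤ n) (A : Fin n → RepSpace l m) :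
    IsRep (((n : ℝ)⁻¹ • ∑ i, (A i).1 : Mat l m)) := by
  have hn0 : (0 : ℝ) < (n : ℝ) := by exact_mod_cast hn
  have happ : ∀ p, (((n : ℝ)⁻¹ • ∑ i, (A i).1 : Mat l m)) p = (n : ℝ)⁻¹ * ∑ i, (A i).1 p := by
    intro p
    rw [PiLp.smul_apply, WithLp.ofLp_sum, Finset.sum_apply p _ (fun i => (A i).1.ofLp), smul_eq_mul]
  constructor
  · intro p
    rw [happ]
    constructor
    · exact mul_nonneg (by positivity) (Finset.sum_nonneg fun i _ => ((A i).2.1 p).1)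
    · rw [inv_mul_le_iff₀ hn0, mul_one]
      calc ∑ i, (A i).1 p ≤ ∑ _i : Fin n, (1 : ℝ) :=
            Finset.sum_le_sum (fun i _ => ((A i).2.1 p).2)
        _ = n := by simp
  · intro j
    have : ∑ k : Fin l, (((n : ℝ)⁻¹ • ∑ i, (A i).1 : Mat l m)) (k, j)
        = (n : ℝ)⁻¹ * ∑ i, ∑ k : Fin l, (A i).1 (k, j) := by
      simp_rw [happ]
      rw [← Finset.mul_sum, Finset.sum_comm]
    rw [this]
    simp_rw [fun i => (A i).2.2 j]
    simp [inv_mul_cancel₀ hn0.ne']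

/-- Variance decomposition in an inner product space. -/
lemma variance_decomp {E : Type*} [NormedAddCommGroup E] [InnerProductSpace ℝ E]
    {n : ℕ} (a : Fin n → E) (c w : E) (hc : ∑ i, (a i - c) = 0) :
    ∑ i, ‖a i - w‖ ^ 2 = ∑ i, ‖a i - c‖ ^ 2 + n * ‖c - w‖ ^ 2 := by
  have key : ∀ i : Fin n, ‖a i - w‖ ^ 2
      = ‖a i - c‖ ^ 2 + 2 * inner ℝ (a i - c) (c - w) + ‖c - w‖ ^ 2 := by
    intro i
    have : a i - w = (a i - c) + (c - w) := by abel
    rw [this, norm_add_sq_real]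
  simp_rw [key]
  rw [Finset.sum_add_distrib, Finset.sum_add_distrib, ← Finset.mul_sum, ← sum_inner, hc]
  simp [mul_comm]

/-- A representative of a mean partition, together with optimally aligned representatives of
the sample, is the barycenter of those representatives. -/
lemma rep_eq_bary {l m n : ℕ} (hn : 1 ≤ n) (X : Fin n → PSpace l m) (M : PSpace l m)
    (hM : ∀ W : PSpace l m,
      (1 / (n : ℝ)) * ∑ i, pdist (X i) M ^ 2 ≤ (1 / (n : ℝ)) * ∑ i, pdist (X i) W ^ 2)
    (W : RepSpace l m) (hW : (⟦W⟧ : PSpace l m) = M)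
    (A : Fin n → RepSpace l m) (hA : ∀ i, (⟦A i⟧ : PSpace l m) = X i)
    (hAd : ∀ i, dist (A i) W = pdist (X i) M) :
    W.1 = (n : ℝ)⁻¹ • ∑ i, (A i).1 := by
  have hn0 : (0 : ℝ) < (n : ℝ) := by exact_mod_cast hn
  set c : Mat l m := (n : ℝ)⁻¹ • ∑ i, (A i).1 with hc_def
  set C : RepSpace l m := ⟨c, isRep_bary hn A⟩ with hC_def
  have hc : ∑ i, ((A i).1 - c) = 0 := by
    rw [Finset.sum_sub_distrib, Finset.sum_const, Finset.card_univ, Fintype.card_fin,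
      sub_eq_zero, hc_def]
    rw [← Nat.cast_smul_eq_nsmul ℝ, smul_smul, mul_inv_cancel₀ hn0.ne', one_smul]
  have hvar := variance_decomp (fun i => (A i).1) c W.1 hc
  have hdist : ∀ i, dist (A i) W = ‖(A i).1 - W.1‖ := fun i => by
    rw [Subtype.dist_eq, dist_eq_norm]
  have hF : ∑ i, pdist (X i) M ^ 2 = ∑ i, ‖(A i).1 - c‖ ^ 2 + n * ‖c - W.1‖ ^ 2 := by
    rw [← hvar]
    exact Finset.sum_congr rfl fun i _ => by rw [← hAd i, hdist i]
  have hFC : ∑ i, pdist (X i) (⟦C⟧ : PSpace l m) ^ 2 ≤ ∑ i, ‖(A i).1 - c‖ ^ 2 := by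
    refine Finset.sum_le_sum fun i _ => ?_
    have h1 : pdist (X i) (⟦C⟧ : PSpace l m) ≤ ‖(A i).1 - c‖ := by
      have := pdist_le_s14 (hA i) (rfl : (⟦C⟧ : PSpace l m) = ⟦C⟧)
      rwa [Subtype.dist_eq, dist_eq_norm] at this
    exact pow_le_pow_left₀ (pdist_nonneg _ _) h1 2
  have hMC : ∑ i, pdist (X i) M ^ 2 ≤ ∑ i, pdist (X i) (⟦C⟧ : PSpace l m) ^ 2 := by
    have := hM (⟦C⟧ : PSpace l m)
    have h1n : (0 : ℝ) < 1 / (n : ℝ) := by positivity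
    exact le_of_mul_le_mul_left (by linarith [this]) h1n
  have hzero : (n : ℝ) * ‖c - W.1‖ ^ 2 ≤ 0 := by
    have := hF ▸ (hMC.trans hFC)
    linarith
  have hsq : ‖c - W.1‖ ^ 2 = 0 := by nlinarith [sq_nonneg ‖c - W.1‖]
  have h0 : ‖c - W.1‖ = 0 := by
    have := sq_eq_zero_iff.1 hsq
    simpa using this
  have := sub_eq_zero.1 (norm_eq_zero.1 h0)
  exact this.symm

end Aux

open scoped Classical in
theorem stmt14 {l m n : ℕ} (hl : 1 ≤ l) (hm : 1 ≤ m) (hn : 1 ≤ n)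
    (X : Fin n → PSpace l m) (M M' : PSpace l m)
    (hM : ∀ W : PSpace l m,
      (1 / (n : ℝ)) * ∑ i, pdist (X i) M ^ 2 ≤ (1 / (n : ℝ)) * ∑ i, pdist (X i) W ^ 2)
    (hM' : ∀ W : PSpace l m,
      (1 / (n : ℝ)) * ∑ i, pdist (X i) M' ^ 2 ≤ (1 / (n : ℝ)) * ∑ i, pdist (X i) W ^ 2) :
    ∃ A A' : Fin n → RepSpace l m,
      (∀ i, (⟦A i⟧ : PSpace l m) = X i) ∧ (∀ i, (⟦A' i⟧ : PSpace l m) = X i) ∧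
      pdist M M' ≤
        (1 / (n : ℝ)) * ∑ j ∈ Finset.univ.filter (fun j => A j ≠ A' j), dist (A j) (A' j) := by
  have hn0 : (0 : ℝ) < (n : ℝ) := by exact_mod_cast hn
  obtain ⟨W, hW⟩ := Quotient.exists_rep M
  obtain ⟨W', hW'⟩ := Quotient.exists_rep M'
  choose A hA hAd using fun i => exists_opt (X i) W
  choose A' hA' hA'd using fun i => exists_opt (X i) W'
  have hAd' : ∀ i, dist (A i) W = pdist (X i) M := fun i => by rw [hAd i, hW]
  have hA'd' : ∀ i, dist (A' i) W' = pdist (X i) M' := fun i => by rw [hA'd i, hW']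
  have hCW : W.1 = (n : ℝ)⁻¹ • ∑ i, (A i).1 := rep_eq_bary hn X M hM W hW A hA hAd'
  have hCW' : W'.1 = (n : ℝ)⁻¹ • ∑ i, (A' i).1 := rep_eq_bary hn X M' hM' W' hW' A' hA' hA'd'
  refine ⟨A, A', hA, hA', ?_⟩
  have step1 : pdist M M' ≤ dist W W' := pdist_le_s14 hW hW'
  have step2 : dist W W' ≤ (1 / (n : ℝ)) * ∑ i, dist (A i) (A' i) := by
    rw [Subtype.dist_eq, dist_eq_norm, hCW, hCW', ← smul_sub, ← Finset.sum_sub_distrib,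
      norm_smul]
    have h1 : ‖((n : ℝ)⁻¹)‖ = 1 / (n : ℝ) := by
      rw [Real.norm_eq_abs, abs_of_pos (by positivity), one_div]
    rw [h1]
    refine mul_le_mul_of_nonneg_left ?_ (by positivity)
    refine (norm_sum_le _ _).trans (le_of_eq ?_)
    exact Finset.sum_congr rfl fun i _ => by rw [Subtype.dist_eq, dist_eq_norm]
  have step3 : ∑ j ∈ Finset.univ.filter (fun j => A j ≠ A' j), dist (A j) (A' j)
      = ∑ i, dist (A i) (A' i) := by
    refine Finset.sum_filter_of_ne fun j _ hj => ?_
    intro hEq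
    exact hj (by rw [hEq, dist_self])
  rw [step3]
  exact step1.trans step2

end
end
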